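/- Let α > −1 with α ≠ 0 and let B₁, B₂ ∈ ℝ. There exists a constant C > 0, depending only on α, B₁, B₂, such that for every ε ∈ (0,1) there is a twice continuously differentiable function c : (0, ε^{−1}) → ℝ satisfying c''(r) + c'(r)/r + 8(1+α)² r^{2α}(1+r^{2+2α})^{−2} c(r) = −ε² r^{2α}(1+r^{2+2α})^{−2}·(B₁ r² + B₂·(4(1+α)² g_α(r)² + g_α(r)·r)) for all 0 < r < ε^{−1}, with lim_{r→0⁺} c(r) = 0, lim_{r→0⁺} c'(r) = 0, and |c(r)| ≤ C·ε²·(1 + (1+r)^{−2α})·log(2+r) for all 0 < r < ε^{−1}. -/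

import Mathlib

open Filter Topology

/-- `g_α(r) = -r/(4α(1+α)(1+r^{2+2α}))`. -/
noncomputable def gfun (α r : ℝ) : ℝ :=
  -r / (4 * α * (1 + α) * (1 + r ^ (2 + 2 * α)))

noncomputable section
namespace Stmt10
open Real

variable (α B₁ B₂ : ℝ)

def S : ℝ := 2 + 2 * α
def w (r : ℝ) : ℝ := 1 + r ^ S α
def z₀ (r : ℝ) : ℝ := (1 - r ^ S α) / w α r
def z₁ (r : ℝ) : ℝ := S α * z₀ α r * Real.log r + 4 / w α r
def z₀d (r : ℝ) : ℝ := -2 * S α * r ^ S α / (r * (w α r) ^ 2)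
def z₀dd (r : ℝ) : ℝ :=
  -2 * S α * (S α - 1) * r ^ S α / (r ^ 2 * (w α r) ^ 2)
    + 4 * (S α) ^ 2 * (r ^ S α) ^ 2 / (r ^ 2 * (w α r) ^ 3)
def z₁d (r : ℝ) : ℝ :=
  S α * z₀d α r * Real.log r + S α * z₀ α r / r - 4 * S α * r ^ S α / (r * (w α r) ^ 2)
def z₁dd (r : ℝ) : ℝ :=
  S α * z₀dd α r * Real.log r + 2 * S α * z₀d α r / r - S α * z₀ α r / r ^ 2
    - 4 * S α * (S α - 1) * r ^ S α / (r ^ 2 * (w α r) ^ 2)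
    + 8 * (S α) ^ 2 * (r ^ S α) ^ 2 / (r ^ 2 * (w α r) ^ 3)

def V (r : ℝ) : ℝ := 8 * (1 + α) ^ 2 * r ^ (2 * α) / (w α r) ^ 2
def E (r : ℝ) : ℝ :=
  B₁ + B₂ * (1 / (4 * α ^ 2 * (w α r) ^ 2) - 1 / (4 * α * (1 + α) * (w α r)))
def Hn (r : ℝ) : ℝ := -(r ^ S α) * E α B₁ B₂ r / (w α r) ^ 2
def q₀ (t : ℝ) : ℝ := z₀ α t * t * Hn α B₁ B₂ t
def q₁ (t : ℝ) : ℝ :=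
  (S α * z₀ α t * (t * Real.log t) + 4 * t / w α t) * Hn α B₁ B₂ t
def I₀ (r : ℝ) : ℝ := ∫ t in (0:ℝ)..r, q₀ α B₁ B₂ t
def I₁ (r : ℝ) : ℝ := ∫ t in (0:ℝ)..r, q₁ α B₁ B₂ t
def c₁ (r : ℝ) : ℝ := (z₁ α r * I₀ α B₁ B₂ r - z₀ α r * I₁ α B₁ B₂ r) / S α
def c₁d (r : ℝ) : ℝ := (z₁d α r * I₀ α B₁ B₂ r - z₀d α r * I₁ α B₁ B₂ r) / S α
def c₁dd (r : ℝ) : ℝ :=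
  (z₁dd α r * I₀ α B₁ B₂ r - z₀dd α r * I₁ α B₁ B₂ r) / S α + Hn α B₁ B₂ r

lemma S_pos (hα : -1 < α) : 0 < S α := by unfold S; linarith

lemma rpow_S_nonneg {r : ℝ} (hr : 0 ≤ r) : 0 ≤ r ^ S α := Real.rpow_nonneg hr _

lemma w_pos {r : ℝ} (hr : 0 ≤ r) : 0 < w α r := by
  have := rpow_S_nonneg α (r := r) hr; unfold w; linarith

lemma w_ne {r : ℝ} (hr : 0 ≤ r) : w α r ≠ 0 := (w_pos α hr).ne'

lemma one_le_w {r : ℝ} (hr : 0 ≤ r) : 1 ≤ w α r := by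
  have := rpow_S_nonneg α (r := r) hr; unfold w; linarith

lemma hasDerivAt_rpowS {r : ℝ} (hr : 0 < r) :
    HasDerivAt (fun t : ℝ => t ^ S α) (S α * r ^ S α / r) r := by
  have h := Real.hasDerivAt_rpow_const (x := r) (p := S α) (Or.inl hr.ne')
  convert h using 1
  rw [Real.rpow_sub hr, Real.rpow_one]
  ring

lemma hasDerivAt_w {r : ℝ} (hr : 0 < r) :
    HasDerivAt (w α) (S α * r ^ S α / r) r := by
  exact (hasDerivAt_rpowS α hr).const_add 1

lemma hasDerivAt_z₀ {r : ℝ} (hr : 0 < r) :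
    HasDerivAt (z₀ α) (z₀d α r) r := by
  have hw := w_ne α hr.le
  have h := ((hasDerivAt_rpowS α hr).const_sub 1).div (hasDerivAt_w α hr) hw
  refine h.congr_deriv ?_
  unfold z₀d w
  field_simp
  ring

lemma hasDerivAt_z₀d {r : ℝ} (hr : 0 < r) :
    HasDerivAt (z₀d α) (z₀dd α r) r := by
  have hw := w_ne α hr.le
  have hrw : r * (w α r) ^ 2 ≠ 0 := by positivity
  have h := (((hasDerivAt_rpowS α hr).const_mul (-2 * S α)).div
    ((hasDerivAt_id r).mul ((hasDerivAt_w α hr).pow 2)) hrw)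
  refine h.congr_deriv ?_
  simp only [Pi.mul_apply, Pi.pow_apply, id_eq]
  unfold z₀dd w
  field_simp
  ring

lemma hasDerivAt_z₁ {r : ℝ} (hr : 0 < r) :
    HasDerivAt (z₁ α) (z₁d α r) r := by
  have hw := w_ne α hr.le
  have h := (((hasDerivAt_z₀ α hr).const_mul (S α)).mul (Real.hasDerivAt_log hr.ne')).add
    ((hasDerivAt_const r (4:ℝ)).div (hasDerivAt_w α hr) hw)
  refine h.congr_deriv ?_
  unfold z₁d z₀d w
  field_simp
  ring

lemma hasDerivAt_z₁d {r : ℝ} (hr : 0 < r) :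
    HasDerivAt (z₁d α) (z₁dd α r) r := by
  have hw := w_ne α hr.le
  have hrw : r * (w α r) ^ 2 ≠ 0 := by positivity
  have h1 := ((hasDerivAt_z₀d α hr).const_mul (S α)).mul (Real.hasDerivAt_log hr.ne')
  have h2 := ((hasDerivAt_z₀ α hr).const_mul (S α)).div (hasDerivAt_id r) hr.ne'
  have h3 := ((hasDerivAt_rpowS α hr).const_mul (4 * S α)).div
    ((hasDerivAt_id r).mul ((hasDerivAt_w α hr).pow 2)) hrw
  have h := (h1.add h2).sub h3
  refine h.congr_deriv ?_
  simp only [Pi.mul_apply, Pi.pow_apply, id_eq]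
  unfold z₁dd z₀dd z₀d w
  field_simp
  ring

lemma rpow_two_alpha {r : ℝ} (hr : 0 < r) : r ^ (2 * α) = r ^ S α / r ^ 2 := by
  rw [show (2:ℝ) * α = S α - 2 by unfold S; ring, Real.rpow_sub hr, Real.rpow_two]

lemma Lz₀ {r : ℝ} (hr : 0 < r) :
    z₀dd α r + z₀d α r / r + V α r * z₀ α r = 0 := by
  have hw := w_ne α hr.le
  have hS : (1 + α) ^ 2 = (S α)^2 / 4 := by unfold S; ring
  unfold z₀dd z₀d V z₀ w
  rw [rpow_two_alpha α hr, hS]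
  field_simp
  ring

lemma Lz₁ {r : ℝ} (hr : 0 < r) :
    z₁dd α r + z₁d α r / r + V α r * z₁ α r = 0 := by
  have hw := w_ne α hr.le
  have h0 := Lz₀ α hr
  have hS : (1 + α) ^ 2 = (S α)^2 / 4 := by unfold S; ring
  have expand : z₁dd α r + z₁d α r / r + V α r * z₁ α r
      = (z₀dd α r + z₀d α r / r + V α r * z₀ α r) * (S α * Real.log r)
        + (2 * S α * z₀d α r / r - S α * z₀ α r / r ^ 2
          - 4 * S α * (S α - 1) * r ^ S α / (r ^ 2 * (w α r) ^ 2)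
          + 8 * (S α) ^ 2 * (r ^ S α) ^ 2 / (r ^ 2 * (w α r) ^ 3)
          + S α * z₀ α r / r ^ 2 - 4 * S α * r ^ S α / (r^2 * (w α r) ^ 2)
          + V α r * (4 / w α r)) := by
    unfold z₁dd z₁d z₁
    have : r ≠ 0 := hr.ne'
    field_simp
    ring
  rw [expand, h0]
  unfold z₀d z₀ V w
  rw [rpow_two_alpha α hr, hS]
  field_simp
  ring

lemma wronskian {r : ℝ} (hr : 0 < r) :
    z₁d α r * z₀ α r - z₀d α r * z₁ α r = S α / r := by
  have hw := w_ne α hr.le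
  unfold z₁d z₀d z₁ z₀ w
  field_simp
  ring

/-- the statement's forcing equals `ε² · Hn`. -/
lemma forcing_eq (hα : -1 < α) (hα0 : α ≠ 0) {r : ℝ} (hr : 0 < r) (ε : ℝ) :
    -(ε ^ 2) * r ^ (2 * α) / (1 + r ^ (2 + 2 * α)) ^ 2
        * (B₁ * r ^ 2 + B₂ * (4 * (1 + α) ^ 2 * gfun α r ^ 2 + gfun α r * r))
      = ε ^ 2 * Hn α B₁ B₂ r := by
  have hw : w α r ≠ 0 := w_ne α hr.le
  have hα1 : (1:ℝ) + α ≠ 0 := by linarith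
  unfold Hn E gfun
  rw [show (2:ℝ) + 2 * α = S α from rfl, rpow_two_alpha α hr]
  have hw' : (1:ℝ) + r ^ S α ≠ 0 := by unfold w at hw; exact hw
  unfold w
  field_simp
  ring


section cont

lemma continuous_rpowS (hα : -1 < α) : Continuous fun t : ℝ => t ^ S α := by
  rw [continuous_iff_continuousAt]
  exact fun t => Real.continuousAt_rpow_const t _ (Or.inr (S_pos α hα).le)

lemma continuousOn_w (hα : -1 < α) : ContinuousOn (w α) (Set.Ici 0) :=
  (continuous_const.add (continuous_rpowS α hα)).continuousOn

lemma continuousOn_z₀ (hα : -1 < α) : ContinuousOn (z₀ α) (Set.Ici 0) :=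
  ((continuous_const.sub (continuous_rpowS α hα)).continuousOn).div
    (continuousOn_w α hα) (fun t ht => w_ne α ht)

lemma continuousOn_E (hα : -1 < α) (hα0 : α ≠ 0) :
    ContinuousOn (E α B₁ B₂) (Set.Ici 0) := by
  have hα1 : (1:ℝ) + α ≠ 0 := by intro h; linarith [hα]
  apply continuousOn_const.add
  apply continuousOn_const.mul
  apply ContinuousOn.sub
  · exact continuousOn_const.div
      (continuousOn_const.mul ((continuousOn_w α hα).pow 2))
      (fun t ht => by
        have := w_ne α ht
        positivity)
  · exact continuousOn_const.div (continuousOn_const.mul (continuousOn_w α hα))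
      (fun t ht => by
        have := w_ne α ht
        positivity)

lemma continuousOn_Hn (hα : -1 < α) (hα0 : α ≠ 0) : ContinuousOn (Hn α B₁ B₂) (Set.Ici 0) :=
  (((continuous_rpowS α hα).neg.continuousOn).mul (continuousOn_E α B₁ B₂ hα hα0)).div
    ((continuousOn_w α hα).pow 2)
    (fun t ht => pow_ne_zero 2 (w_ne α ht))

lemma continuousOn_q₀ (hα : -1 < α) (hα0 : α ≠ 0) : ContinuousOn (q₀ α B₁ B₂) (Set.Ici 0) :=
  (((continuousOn_z₀ α hα).mul continuous_id.continuousOn).mul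
    (continuousOn_Hn α B₁ B₂ hα hα0))

lemma continuousOn_q₁ (hα : -1 < α) (hα0 : α ≠ 0) : ContinuousOn (q₁ α B₁ B₂) (Set.Ici 0) := by
  apply ContinuousOn.mul _ (continuousOn_Hn α B₁ B₂ hα hα0)
  apply ContinuousOn.add
  · exact (continuousOn_const.mul (continuousOn_z₀ α hα)).mul
      Real.continuous_mul_log.continuousOn
  · exact (continuousOn_const.mul continuous_id.continuousOn).div
      (continuousOn_w α hα) (fun t ht => w_ne α ht)

end cont

section FTC

lemma uIcc_subset_Ici {a b : ℝ} (ha : 0 ≤ a) (hb : 0 ≤ b) :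
    Set.uIcc a b ⊆ Set.Ici 0 := fun x hx => (le_inf ha hb).trans hx.1

lemma intble_q₀ (hα : -1 < α) (hα0 : α ≠ 0) {a b : ℝ} (ha : 0 ≤ a) (hb : 0 ≤ b) :
    IntervalIntegrable (q₀ α B₁ B₂) MeasureTheory.volume a b :=
  ((continuousOn_q₀ α B₁ B₂ hα hα0).mono (uIcc_subset_Ici ha hb)).intervalIntegrable

lemma intble_q₁ (hα : -1 < α) (hα0 : α ≠ 0) {a b : ℝ} (ha : 0 ≤ a) (hb : 0 ≤ b) :
    IntervalIntegrable (q₁ α B₁ B₂) MeasureTheory.volume a b :=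
  ((continuousOn_q₁ α B₁ B₂ hα hα0).mono (uIcc_subset_Ici ha hb)).intervalIntegrable

lemma hasDerivAt_I₀ (hα : -1 < α) (hα0 : α ≠ 0) {r : ℝ} (hr : 0 < r) :
    HasDerivAt (I₀ α B₁ B₂) (q₀ α B₁ B₂ r) r := by
  refine intervalIntegral.integral_hasDerivAt_right
    (intble_q₀ α B₁ B₂ hα hα0 le_rfl hr.le)
    ⟨Set.Ici 0, Ici_mem_nhds hr, ?_⟩
    (((continuousOn_q₀ α B₁ B₂ hα hα0)).continuousAt (Ici_mem_nhds hr))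
  exact (continuousOn_q₀ α B₁ B₂ hα hα0).aestronglyMeasurable measurableSet_Ici

lemma hasDerivAt_I₁ (hα : -1 < α) (hα0 : α ≠ 0) {r : ℝ} (hr : 0 < r) :
    HasDerivAt (I₁ α B₁ B₂) (q₁ α B₁ B₂ r) r := by
  refine intervalIntegral.integral_hasDerivAt_right
    (intble_q₁ α B₁ B₂ hα hα0 le_rfl hr.le)
    ⟨Set.Ici 0, Ici_mem_nhds hr, ?_⟩
    (((continuousOn_q₁ α B₁ B₂ hα hα0)).continuousAt (Ici_mem_nhds hr))
  exact (continuousOn_q₁ α B₁ B₂ hα hα0).aestronglyMeasurable measurableSet_Ici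

lemma z₁_mul_q₀ {r : ℝ} (hr : 0 < r) :
    z₁ α r * q₀ α B₁ B₂ r = z₀ α r * q₁ α B₁ B₂ r := by
  unfold z₁ q₀ q₁
  ring

lemma z₁d_q₀_sub (hα : -1 < α) {r : ℝ} (hr : 0 < r) :
    z₁d α r * q₀ α B₁ B₂ r - z₀d α r * q₁ α B₁ B₂ r = S α * Hn α B₁ B₂ r := by
  have hwr := wronskian α hr
  have hq₁ : q₁ α B₁ B₂ r = z₁ α r * r * Hn α B₁ B₂ r := by unfold q₁ z₁; ring
  have hq₀ : q₀ α B₁ B₂ r = z₀ α r * r * Hn α B₁ B₂ r := rfl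
  rw [hq₀, hq₁]
  have : z₁d α r * (z₀ α r * r * Hn α B₁ B₂ r) - z₀d α r * (z₁ α r * r * Hn α B₁ B₂ r)
      = (z₁d α r * z₀ α r - z₀d α r * z₁ α r) * r * Hn α B₁ B₂ r := by ring
  rw [this, hwr]
  field_simp

lemma hasDerivAt_c₁ (hα : -1 < α) (hα0 : α ≠ 0) {r : ℝ} (hr : 0 < r) :
    HasDerivAt (c₁ α B₁ B₂) (c₁d α B₁ B₂ r) r := by
  have h := (((hasDerivAt_z₁ α hr).mul (hasDerivAt_I₀ α B₁ B₂ hα hα0 hr)).sub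
    ((hasDerivAt_z₀ α hr).mul (hasDerivAt_I₁ α B₁ B₂ hα hα0 hr))).div_const (S α)
  refine h.congr_deriv ?_
  unfold c₁d
  rw [show z₁d α r * I₀ α B₁ B₂ r - z₀d α r * I₁ α B₁ B₂ r
      = z₁d α r * I₀ α B₁ B₂ r + z₁ α r * q₀ α B₁ B₂ r
        - (z₀d α r * I₁ α B₁ B₂ r + z₀ α r * q₁ α B₁ B₂ r)
        + (z₀ α r * q₁ α B₁ B₂ r - z₁ α r * q₀ α B₁ B₂ r) by ring,
    ← z₁_mul_q₀ α B₁ B₂ hr]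
  ring

lemma hasDerivAt_c₁d (hα : -1 < α) (hα0 : α ≠ 0) {r : ℝ} (hr : 0 < r) :
    HasDerivAt (c₁d α B₁ B₂) (c₁dd α B₁ B₂ r) r := by
  have hS := (S_pos α hα).ne'
  have h := (((hasDerivAt_z₁d α hr).mul (hasDerivAt_I₀ α B₁ B₂ hα hα0 hr)).sub
    ((hasDerivAt_z₀d α hr).mul (hasDerivAt_I₁ α B₁ B₂ hα hα0 hr))).div_const (S α)
  refine h.congr_deriv ?_
  unfold c₁dd
  rw [show z₁dd α r * I₀ α B₁ B₂ r + z₁d α r * q₀ α B₁ B₂ r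
        - (z₀dd α r * I₁ α B₁ B₂ r + z₀d α r * q₁ α B₁ B₂ r)
      = (z₁dd α r * I₀ α B₁ B₂ r - z₀dd α r * I₁ α B₁ B₂ r)
        + (z₁d α r * q₀ α B₁ B₂ r - z₀d α r * q₁ α B₁ B₂ r) by ring,
    z₁d_q₀_sub α B₁ B₂ hα hr]
  field_simp

lemma ode_c₁ (hα : -1 < α) (hα0 : α ≠ 0) {r : ℝ} (hr : 0 < r) :
    c₁dd α B₁ B₂ r + c₁d α B₁ B₂ r / r + V α r * c₁ α B₁ B₂ r = Hn α B₁ B₂ r := by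
  have hS := (S_pos α hα).ne'
  have h1 : z₁dd α r = -(z₁d α r / r) - V α r * z₁ α r := by linarith [Lz₁ α hr]
  have h0 : z₀dd α r = -(z₀d α r / r) - V α r * z₀ α r := by linarith [Lz₀ α hr]
  unfold c₁dd c₁d c₁
  rw [h1, h0]
  field_simp
  ring

end FTC

section bounds

def K : ℝ := |B₁| + |B₂| * (1 / (4 * α ^ 2) + 1 / (4 * |α| * (1 + α)))

lemma K_nonneg (hα : -1 < α) : 0 ≤ K α B₁ B₂ := by
  have h1 : (0:ℝ) < 1 + α := by linarith
  have h2 : 0 ≤ 1 / (4 * α ^ 2) := by positivity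
  have h3 : 0 ≤ 1 / (4 * |α| * (1 + α)) := by positivity
  have := abs_nonneg B₁
  have := abs_nonneg B₂
  unfold K
  nlinarith

lemma abs_E_le (hα : -1 < α) (hα0 : α ≠ 0) {r : ℝ} (hr : 0 ≤ r) :
    |E α B₁ B₂ r| ≤ K α B₁ B₂ := by
  have hα1 : (0:ℝ) < 1 + α := by linarith
  have hα2 : (0:ℝ) < α ^ 2 := by positivity
  have hαa : (0:ℝ) < |α| := abs_pos.mpr hα0
  have hw1 : 1 ≤ w α r := one_le_w α hr
  have hwp : 0 < w α r := by linarith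
  have hw2 : (1:ℝ) ≤ (w α r) ^ 2 := by nlinarith
  have h1 : |1 / (4 * α ^ 2 * (w α r) ^ 2)| ≤ 1 / (4 * α ^ 2) := by
    rw [abs_of_pos (by positivity)]
    apply one_div_le_one_div_of_le (by positivity)
    nlinarith [mul_le_mul_of_nonneg_left hw2 hα2.le]
  have h2 : |1 / (4 * α * (1 + α) * (w α r))| ≤ 1 / (4 * |α| * (1 + α)) := by
    have habs : |4 * α * (1 + α) * (w α r)| = 4 * |α| * (1 + α) * (w α r) := by
      rw [abs_mul, abs_mul, abs_mul, abs_of_pos hα1, abs_of_pos hwp]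
      norm_num
    rw [abs_div, abs_one, habs]
    apply one_div_le_one_div_of_le (by positivity)
    have hbase : (0:ℝ) < 4 * |α| * (1 + α) := by positivity
    nlinarith
  unfold E K
  calc |B₁ + B₂ * (1 / (4 * α ^ 2 * (w α r) ^ 2) - 1 / (4 * α * (1 + α) * (w α r)))|
      ≤ |B₁| + |B₂| * |1 / (4 * α ^ 2 * (w α r) ^ 2) - 1 / (4 * α * (1 + α) * (w α r))| := by
        rw [← abs_mul]; exact abs_add_le _ _
    _ ≤ |B₁| + |B₂| * (|1 / (4 * α ^ 2 * (w α r) ^ 2)| + |1 / (4 * α * (1 + α) * (w α r))|) := by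
        have := abs_sub (1 / (4 * α ^ 2 * (w α r) ^ 2)) (1 / (4 * α * (1 + α) * (w α r)))
        nlinarith [abs_nonneg B₂]
    _ ≤ |B₁| + |B₂| * (1 / (4 * α ^ 2) + 1 / (4 * |α| * (1 + α))) := by
        nlinarith [abs_nonneg B₂]

lemma abs_z₀_le {r : ℝ} (hr : 0 ≤ r) : |z₀ α r| ≤ 1 := by
  have hu : 0 ≤ r ^ S α := rpow_S_nonneg α hr
  have hwp : 0 < w α r := w_pos α hr
  unfold z₀
  rw [abs_div, abs_of_pos hwp, div_le_one hwp]
  rw [abs_le]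
  constructor <;> unfold w <;> linarith

lemma abs_Hn_le (hα : -1 < α) (hα0 : α ≠ 0) {r : ℝ} (hr : 0 ≤ r) :
    |Hn α B₁ B₂ r| ≤ K α B₁ B₂ * (r ^ S α / (w α r) ^ 2) := by
  have hu : 0 ≤ r ^ S α := rpow_S_nonneg α hr
  have hwp : 0 < w α r := w_pos α hr
  have hE := abs_E_le α B₁ B₂ hα hα0 hr
  unfold Hn
  rw [abs_div, abs_mul, abs_neg, abs_of_nonneg hu, abs_of_pos (by positivity : (0:ℝ) < (w α r) ^ 2)]
  rw [div_le_iff₀ (by positivity : (0:ℝ) < (w α r) ^ 2)]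
  have : K α B₁ B₂ * (r ^ S α / (w α r) ^ 2) * (w α r) ^ 2 = K α B₁ B₂ * r ^ S α := by
    field_simp
  rw [this]
  calc r ^ S α * |E α B₁ B₂ r| ≤ r ^ S α * K α B₁ B₂ := by
        exact mul_le_mul_of_nonneg_left hE hu
    _ = K α B₁ B₂ * r ^ S α := by ring

lemma abs_q₀_le (hα : -1 < α) (hα0 : α ≠ 0) {t : ℝ} (ht : 0 ≤ t) :
    |q₀ α B₁ B₂ t| ≤ K α B₁ B₂ * (t ^ S α * t / (w α t) ^ 2) := by
  have hz := abs_z₀_le α (r := t) ht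
  have hH := abs_Hn_le α B₁ B₂ hα hα0 ht
  have hK := K_nonneg α B₁ B₂ hα
  have hu : 0 ≤ t ^ S α := rpow_S_nonneg α ht
  have hwp : 0 < w α t := w_pos α ht
  unfold q₀
  rw [abs_mul, abs_mul, abs_of_nonneg ht]
  calc |z₀ α t| * t * |Hn α B₁ B₂ t| ≤ 1 * t * (K α B₁ B₂ * (t ^ S α / (w α t) ^ 2)) := by
        apply mul_le_mul _ hH (abs_nonneg _) (by positivity)
        exact mul_le_mul_of_nonneg_right hz ht
    _ = K α B₁ B₂ * (t ^ S α * t / (w α t) ^ 2) := by ring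

lemma sqrt_log_bound {t : ℝ} (h0 : 0 < t) (h1 : t ≤ 1) :
    t * |Real.log t| ≤ 2 * Real.sqrt t := by
  have hs : 0 < Real.sqrt t := Real.sqrt_pos.mpr h0
  have hl : |Real.log t| = -Real.log t := abs_of_nonpos (Real.log_nonpos h0.le h1)
  have key := Real.log_le_sub_one_of_pos (show (0:ℝ) < 1 / Real.sqrt t by positivity)
  rw [Real.log_div one_ne_zero hs.ne', Real.log_one, Real.log_sqrt h0.le] at key
  have hneg : -Real.log t ≤ 2 / Real.sqrt t := by
    have h2 : 0 - Real.log t / 2 ≤ 1 / Real.sqrt t - 1 := key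
    have e : 2 / Real.sqrt t = 2 * (1 / Real.sqrt t) := by ring
    rw [e]
    linarith
  rw [hl]
  calc t * -Real.log t ≤ t * (2 / Real.sqrt t) :=
        mul_le_mul_of_nonneg_left hneg h0.le
    _ = 2 * (t / Real.sqrt t) := by ring
    _ = 2 * Real.sqrt t := by rw [Real.div_sqrt]

lemma abs_q₁_le (hα : -1 < α) (hα0 : α ≠ 0) {t : ℝ} (ht : 0 ≤ t) :
    |q₁ α B₁ B₂ t|
      ≤ K α B₁ B₂ * ((S α * (t * |Real.log t|) + 4 * t) * (t ^ S α / (w α t) ^ 2)) := by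
  have hz := abs_z₀_le α (r := t) ht
  have hH := abs_Hn_le α B₁ B₂ hα hα0 ht
  have hK := K_nonneg α B₁ B₂ hα
  have hu : 0 ≤ t ^ S α := rpow_S_nonneg α ht
  have hwp : 0 < w α t := w_pos α ht
  have hw1 : 1 ≤ w α t := one_le_w α ht
  have hS : 0 < S α := S_pos α hα
  have hfac : |S α * z₀ α t * (t * Real.log t) + 4 * t / w α t|
      ≤ S α * (t * |Real.log t|) + 4 * t := by
    have e1 : |S α * z₀ α t * (t * Real.log t)| = S α * |z₀ α t| * (t * |Real.log t|) := by
      rw [abs_mul, abs_mul, abs_mul, abs_of_pos hS, abs_of_nonneg ht]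
    have e2 : |4 * t / w α t| ≤ 4 * t := by
      rw [abs_div, abs_of_pos hwp, abs_mul, abs_of_nonneg ht,
        show |(4:ℝ)| = 4 by norm_num]
      exact div_le_self (by positivity) hw1
    calc |S α * z₀ α t * (t * Real.log t) + 4 * t / w α t|
        ≤ |S α * z₀ α t * (t * Real.log t)| + |4 * t / w α t| := abs_add_le _ _
      _ ≤ S α * (t * |Real.log t|) + 4 * t := by
          rw [e1]
          have hx : 0 ≤ t * |Real.log t| := mul_nonneg ht (abs_nonneg _)
          nlinarith [mul_le_mul_of_nonneg_right hz hx]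
  have hfirst : (0:ℝ) ≤ S α * (t * |Real.log t|) + 4 * t := by
    have hx : 0 ≤ t * |Real.log t| := mul_nonneg ht (abs_nonneg _)
    nlinarith
  unfold q₁
  rw [abs_mul]
  calc |S α * z₀ α t * (t * Real.log t) + 4 * t / w α t| * |Hn α B₁ B₂ t|
      ≤ (S α * (t * |Real.log t|) + 4 * t) * (K α B₁ B₂ * (t ^ S α / (w α t) ^ 2)) :=
        mul_le_mul hfac hH (abs_nonneg _) hfirst
    _ = K α B₁ B₂ * ((S α * (t * |Real.log t|) + 4 * t) * (t ^ S α / (w α t) ^ 2)) := by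
        ring


lemma ratio_le_one {t : ℝ} (ht : 0 ≤ t) : t ^ S α / (w α t) ^ 2 ≤ 1 := by
  have hu : 0 ≤ t ^ S α := rpow_S_nonneg α ht
  have hw1 : 1 ≤ w α t := one_le_w α ht
  have hw2 : t ^ S α ≤ w α t := by unfold w; linarith
  rw [div_le_one (by positivity)]
  nlinarith

lemma q₀_small (hα : -1 < α) (hα0 : α ≠ 0) {t : ℝ} (h0 : 0 < t) (h1 : t ≤ 1) :
    |q₀ α B₁ B₂ t| ≤ K α B₁ B₂ * t := by
  have hK := K_nonneg α B₁ B₂ hα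
  calc |q₀ α B₁ B₂ t| ≤ K α B₁ B₂ * (t ^ S α * t / (w α t) ^ 2) :=
        abs_q₀_le α B₁ B₂ hα hα0 h0.le
    _ = K α B₁ B₂ * t * (t ^ S α / (w α t) ^ 2) := by ring
    _ ≤ K α B₁ B₂ * t * 1 :=
        mul_le_mul_of_nonneg_left (ratio_le_one α h0.le) (by positivity)
    _ = K α B₁ B₂ * t := by ring

lemma q₁_small (hα : -1 < α) (hα0 : α ≠ 0) {t : ℝ} (h0 : 0 < t) (h1 : t ≤ 1) :
    |q₁ α B₁ B₂ t| ≤ K α B₁ B₂ * (2 * S α * Real.sqrt t + 4 * t) := by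
  have hK := K_nonneg α B₁ B₂ hα
  have hS := S_pos α hα
  have hlog := sqrt_log_bound h0 h1
  have h2 : S α * (t * |Real.log t|) + 4 * t ≤ 2 * S α * Real.sqrt t + 4 * t := by
    nlinarith
  calc |q₁ α B₁ B₂ t|
      ≤ K α B₁ B₂ * ((S α * (t * |Real.log t|) + 4 * t) * (t ^ S α / (w α t) ^ 2)) :=
        abs_q₁_le α B₁ B₂ hα hα0 h0.le
    _ ≤ K α B₁ B₂ * ((2 * S α * Real.sqrt t + 4 * t) * 1) := by
        apply mul_le_mul_of_nonneg_left _ hK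
        apply mul_le_mul h2 (ratio_le_one α h0.le)
          (by positivity)
          (by positivity)
    _ = K α B₁ B₂ * (2 * S α * Real.sqrt t + 4 * t) := by ring

lemma ratio_large {t : ℝ} (hα : -1 < α) (ht : 1 ≤ t) :
    t ^ S α * t / (w α t) ^ 2 ≤ t ^ (1 - S α) := by
  have h0 : (0:ℝ) < t := lt_of_lt_of_le one_pos ht
  have hu : (1:ℝ) ≤ t ^ S α := Real.one_le_rpow ht (S_pos α hα).le
  have hup : (0:ℝ) < t ^ S α := by linarith
  have hw : t ^ S α ≤ w α t := by unfold w; linarith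
  have h1 : t ^ S α * t / (w α t) ^ 2 ≤ t ^ S α * t / (t ^ S α) ^ 2 := by
    apply div_le_div_of_nonneg_left (by positivity) (by positivity)
    nlinarith
  have h2 : t ^ S α * t / (t ^ S α) ^ 2 = t / t ^ S α := by
    field_simp
  rw [Real.rpow_sub h0, Real.rpow_one]
  calc t ^ S α * t / (w α t) ^ 2 ≤ t ^ S α * t / (t ^ S α) ^ 2 := h1
    _ = t / t ^ S α := h2

lemma q₀_large (hα : -1 < α) (hα0 : α ≠ 0) {t : ℝ} (ht : 1 ≤ t) :
    |q₀ α B₁ B₂ t| ≤ K α B₁ B₂ * t ^ (1 - S α) := by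
  have hK := K_nonneg α B₁ B₂ hα
  calc |q₀ α B₁ B₂ t| ≤ K α B₁ B₂ * (t ^ S α * t / (w α t) ^ 2) :=
        abs_q₀_le α B₁ B₂ hα hα0 (by linarith)
    _ ≤ K α B₁ B₂ * t ^ (1 - S α) :=
        mul_le_mul_of_nonneg_left (ratio_large α hα ht) hK

lemma q₁_large (hα : -1 < α) (hα0 : α ≠ 0) {t : ℝ} (ht : 1 ≤ t) :
    |q₁ α B₁ B₂ t| ≤ K α B₁ B₂ * ((S α * Real.log t + 4) * t ^ (1 - S α)) := by
  have hK := K_nonneg α B₁ B₂ hα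
  have hS := S_pos α hα
  have h0 : (0:ℝ) < t := lt_of_lt_of_le one_pos ht
  have hlog : 0 ≤ Real.log t := Real.log_nonneg ht
  have habs : |Real.log t| = Real.log t := abs_of_nonneg hlog
  have key : (S α * (t * |Real.log t|) + 4 * t) * (t ^ S α / (w α t) ^ 2)
      ≤ (S α * Real.log t + 4) * t ^ (1 - S α) := by
    rw [habs]
    have e : (S α * (t * Real.log t) + 4 * t) * (t ^ S α / (w α t) ^ 2)
        = (S α * Real.log t + 4) * (t ^ S α * t / (w α t) ^ 2) := by ring
    rw [e]
    exact mul_le_mul_of_nonneg_left (ratio_large α hα ht) (by positivity)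
  calc |q₁ α B₁ B₂ t|
      ≤ K α B₁ B₂ * ((S α * (t * |Real.log t|) + 4 * t) * (t ^ S α / (w α t) ^ 2)) :=
        abs_q₁_le α B₁ B₂ hα hα0 h0.le
    _ ≤ K α B₁ B₂ * ((S α * Real.log t + 4) * t ^ (1 - S α)) :=
        mul_le_mul_of_nonneg_left key hK

lemma I₀_small (hα : -1 < α) (hα0 : α ≠ 0) {r : ℝ} (h0 : 0 < r) (h1 : r ≤ 1) :
    |I₀ α B₁ B₂ r| ≤ K α B₁ B₂ * r * r := by
  have hK := K_nonneg α B₁ B₂ hα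
  have hb : ∀ t ∈ Set.uIoc (0:ℝ) r, ‖q₀ α B₁ B₂ t‖ ≤ K α B₁ B₂ * r := by
    intro t ht
    rw [Set.uIoc_of_le h0.le] at ht
    calc ‖q₀ α B₁ B₂ t‖ ≤ K α B₁ B₂ * t := q₀_small α B₁ B₂ hα hα0 ht.1 (ht.2.trans h1)
      _ ≤ K α B₁ B₂ * r := mul_le_mul_of_nonneg_left ht.2 hK
  have := intervalIntegral.norm_integral_le_of_norm_le_const hb
  rw [sub_zero, abs_of_pos h0] at this
  exact this

lemma I₁_small (hα : -1 < α) (hα0 : α ≠ 0) {r : ℝ} (h0 : 0 < r) (h1 : r ≤ 1) :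
    |I₁ α B₁ B₂ r| ≤ K α B₁ B₂ * (2 * S α * Real.sqrt r + 4 * r) * r := by
  have hK := K_nonneg α B₁ B₂ hα
  have hS := S_pos α hα
  have hb : ∀ t ∈ Set.uIoc (0:ℝ) r, ‖q₁ α B₁ B₂ t‖
      ≤ K α B₁ B₂ * (2 * S α * Real.sqrt r + 4 * r) := by
    intro t ht
    rw [Set.uIoc_of_le h0.le] at ht
    have hsq : Real.sqrt t ≤ Real.sqrt r := Real.sqrt_le_sqrt ht.2
    calc ‖q₁ α B₁ B₂ t‖ ≤ K α B₁ B₂ * (2 * S α * Real.sqrt t + 4 * t) :=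
          q₁_small α B₁ B₂ hα hα0 ht.1 (ht.2.trans h1)
      _ ≤ K α B₁ B₂ * (2 * S α * Real.sqrt r + 4 * r) := by
          apply mul_le_mul_of_nonneg_left _ hK
          nlinarith [ht.2]
  have := intervalIntegral.norm_integral_le_of_norm_le_const hb
  rw [sub_zero, abs_of_pos h0] at this
  exact this


end bounds

section large

lemma m_ne (hα0 : α ≠ 0) : (2 - S α) ≠ 0 := by
  unfold S; intro h; apply hα0; linarith

lemma continuousOn_tpow {a b : ℝ} (ha : 1 ≤ a) (hb : 1 ≤ b) :
    ContinuousOn (fun t : ℝ => t ^ (1 - S α)) (Set.uIcc a b) := by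
  intro t ht
  have h1 : (1:ℝ) ≤ t := (le_inf ha hb).trans ht.1
  exact (Real.continuousAt_rpow_const t _ (Or.inl (by linarith))).continuousWithinAt

lemma integral_tpow (hα0 : α ≠ 0) {r : ℝ} (hr : 1 ≤ r) :
    ∫ t in (1:ℝ)..r, t ^ (1 - S α) = (r ^ (2 - S α) - 1) / (2 - S α) := by
  have hm := m_ne α hα0
  have h : ∀ t ∈ Set.uIcc (1:ℝ) r,
      HasDerivAt (fun t : ℝ => t ^ (2 - S α) / (2 - S α)) (t ^ (1 - S α)) t := by
    intro t ht
    rw [Set.uIcc_of_le hr] at ht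
    have ht0 : t ≠ 0 := by intro h; rw [h] at ht; linarith [ht.1]
    have h1 := (Real.hasDerivAt_rpow_const (x := t) (p := 2 - S α) (Or.inl ht0)).div_const
      (2 - S α)
    refine h1.congr_deriv ?_
    rw [show (2 - S α - 1 : ℝ) = 1 - S α by ring]
    field_simp
  rw [intervalIntegral.integral_eq_sub_of_hasDerivAt h
    ((continuousOn_tpow α le_rfl hr).intervalIntegrable)]
  rw [Real.one_rpow]
  ring

lemma abs_sub_one_le {x : ℝ} (hx : 0 ≤ x) : |x - 1| ≤ 1 + x := by
  rw [abs_le]; constructor <;> linarith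

lemma int_q₀_large (hα : -1 < α) (hα0 : α ≠ 0) {r : ℝ} (hr : 1 ≤ r) :
    |∫ t in (1:ℝ)..r, q₀ α B₁ B₂ t|
      ≤ K α B₁ B₂ * ((1 + r ^ (2 - S α)) / |2 - S α|) := by
  have hK := K_nonneg α B₁ B₂ hα
  have hm := m_ne α hα0
  have hg : IntervalIntegrable (fun t : ℝ => K α B₁ B₂ * t ^ (1 - S α))
      MeasureTheory.volume 1 r :=
    (continuousOn_const.mul (continuousOn_tpow α le_rfl hr)).intervalIntegrable
  have hae : ∀ᵐ t ∂(MeasureTheory.volume.restrict (Set.uIoc (1:ℝ) r)),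
      ‖q₀ α B₁ B₂ t‖ ≤ K α B₁ B₂ * t ^ (1 - S α) := by
    refine (MeasureTheory.ae_restrict_iff' measurableSet_uIoc).mpr
      (Filter.Eventually.of_forall fun t ht => ?_)
    rw [Set.uIoc_of_le hr] at ht
    exact q₀_large α B₁ B₂ hα hα0 ht.1.le
  have h := intervalIntegral.norm_integral_le_abs_of_norm_le hae hg
  rw [intervalIntegral.integral_const_mul, integral_tpow α hα0 hr] at h
  apply h.trans
  rw [abs_mul, abs_of_nonneg hK, abs_div]
  apply mul_le_mul_of_nonneg_left _ hK
  have hx : 0 ≤ r ^ (2 - S α) := Real.rpow_nonneg (by linarith) _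
  have habs : (0:ℝ) < |2 - S α| := abs_pos.mpr hm
  gcongr
  exact abs_sub_one_le hx

lemma int_q₁_large (hα : -1 < α) (hα0 : α ≠ 0) {r : ℝ} (hr : 1 ≤ r) :
    |∫ t in (1:ℝ)..r, q₁ α B₁ B₂ t|
      ≤ K α B₁ B₂ * (S α * Real.log (2 + r) + 4) * ((1 + r ^ (2 - S α)) / |2 - S α|) := by
  have hK := K_nonneg α B₁ B₂ hα
  have hm := m_ne α hα0
  have hS := S_pos α hα
  have hΛ : 0 ≤ Real.log (2 + r) := Real.log_nonneg (by linarith)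
  have hKS : 0 ≤ K α B₁ B₂ * (S α * Real.log (2 + r) + 4) := by positivity
  have hg : IntervalIntegrable
      (fun t : ℝ => (K α B₁ B₂ * (S α * Real.log (2 + r) + 4)) * t ^ (1 - S α))
      MeasureTheory.volume 1 r :=
    (continuousOn_const.mul (continuousOn_tpow α le_rfl hr)).intervalIntegrable
  have hae : ∀ᵐ t ∂(MeasureTheory.volume.restrict (Set.uIoc (1:ℝ) r)),
      ‖q₁ α B₁ B₂ t‖ ≤ (K α B₁ B₂ * (S α * Real.log (2 + r) + 4)) * t ^ (1 - S α) := by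
    refine (MeasureTheory.ae_restrict_iff' measurableSet_uIoc).mpr
      (Filter.Eventually.of_forall fun t ht => ?_)
    rw [Set.uIoc_of_le hr] at ht
    have ht1 : (1:ℝ) ≤ t := ht.1.le
    have htp : 0 ≤ t ^ (1 - S α) := Real.rpow_nonneg (by linarith) _
    have hlog : Real.log t ≤ Real.log (2 + r) :=
      Real.log_le_log (by linarith) (by linarith [ht.2])
    calc ‖q₁ α B₁ B₂ t‖ ≤ K α B₁ B₂ * ((S α * Real.log t + 4) * t ^ (1 - S α)) :=
          q₁_large α B₁ B₂ hα hα0 ht1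
      _ ≤ (K α B₁ B₂ * (S α * Real.log (2 + r) + 4)) * t ^ (1 - S α) := by
          rw [mul_assoc] at *
          apply mul_le_mul_of_nonneg_left _ hK
          apply mul_le_mul_of_nonneg_right _ htp
          nlinarith
  have h := intervalIntegral.norm_integral_le_abs_of_norm_le hae hg
  rw [intervalIntegral.integral_const_mul, integral_tpow α hα0 hr] at h
  apply h.trans
  rw [abs_mul, abs_of_nonneg hKS, abs_div]
  apply mul_le_mul_of_nonneg_left _ hKS
  have hx : 0 ≤ r ^ (2 - S α) := Real.rpow_nonneg (by linarith) _
  have habs : (0:ℝ) < |2 - S α| := abs_pos.mpr hm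
  gcongr
  exact abs_sub_one_le hx

end large

section assemble

lemma one_le_log {r : ℝ} (hr : (1:ℝ) ≤ r) : 1 ≤ Real.log (2 + r) := by
  rw [Real.le_log_iff_exp_le (by linarith)]
  have := Real.exp_one_lt_d9
  norm_num at this ⊢
  linarith

lemma I₀_decomp (hα : -1 < α) (hα0 : α ≠ 0) {r : ℝ} (hr : 1 ≤ r) :
    I₀ α B₁ B₂ r = I₀ α B₁ B₂ 1 + ∫ t in (1:ℝ)..r, q₀ α B₁ B₂ t :=
  (intervalIntegral.integral_add_adjacent_intervals
    (intble_q₀ α B₁ B₂ hα hα0 le_rfl zero_le_one)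
    (intble_q₀ α B₁ B₂ hα hα0 zero_le_one (by linarith))).symm

lemma I₁_decomp (hα : -1 < α) (hα0 : α ≠ 0) {r : ℝ} (hr : 1 ≤ r) :
    I₁ α B₁ B₂ r = I₁ α B₁ B₂ 1 + ∫ t in (1:ℝ)..r, q₁ α B₁ B₂ t :=
  (intervalIntegral.integral_add_adjacent_intervals
    (intble_q₁ α B₁ B₂ hα hα0 le_rfl zero_le_one)
    (intble_q₁ α B₁ B₂ hα hα0 zero_le_one (by linarith))).symm

lemma I₀_large (hα : -1 < α) (hα0 : α ≠ 0) {r : ℝ} (hr : 1 ≤ r) :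
    |I₀ α B₁ B₂ r| ≤ K α B₁ B₂ * (1 + 1 / |2 - S α|) * (1 + r ^ (2 - S α)) := by
  have hK := K_nonneg α B₁ B₂ hα
  have hA : (0:ℝ) < |2 - S α| := abs_pos.mpr (m_ne α hα0)
  have hx : 0 ≤ r ^ (2 - S α) := Real.rpow_nonneg (by linarith) _
  have h1 : |I₀ α B₁ B₂ 1| ≤ K α B₁ B₂ := by
    have := I₀_small α B₁ B₂ hα hα0 one_pos le_rfl
    simpa using this
  have h2 := int_q₀_large α B₁ B₂ hα hα0 hr
  rw [I₀_decomp α B₁ B₂ hα hα0 hr]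
  calc |I₀ α B₁ B₂ 1 + ∫ t in (1:ℝ)..r, q₀ α B₁ B₂ t|
      ≤ |I₀ α B₁ B₂ 1| + |∫ t in (1:ℝ)..r, q₀ α B₁ B₂ t| := abs_add_le _ _
    _ ≤ K α B₁ B₂ + K α B₁ B₂ * ((1 + r ^ (2 - S α)) / |2 - S α|) := add_le_add h1 h2
    _ ≤ K α B₁ B₂ * (1 + 1 / |2 - S α|) * (1 + r ^ (2 - S α)) := by
        have e1 : K α B₁ B₂ ≤ K α B₁ B₂ * (1 + r ^ (2 - S α)) := by nlinarith
        have e3 : K α B₁ B₂ * (1 + 1 / |2 - S α|) * (1 + r ^ (2 - S α))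
            = K α B₁ B₂ * (1 + r ^ (2 - S α)) + K α B₁ B₂ * ((1 + r ^ (2 - S α)) / |2 - S α|) := by
          field_simp
        linarith [e1, e3.ge, e3.le]

lemma I₁_large (hα : -1 < α) (hα0 : α ≠ 0) {r : ℝ} (hr : 1 ≤ r) :
    |I₁ α B₁ B₂ r| ≤ K α B₁ B₂ * (2 * S α + 4 + (S α + 4) / |2 - S α|)
      * ((1 + r ^ (2 - S α)) * Real.log (2 + r)) := by
  have hK := K_nonneg α B₁ B₂ hα
  have hS := S_pos α hα
  have hA : (0:ℝ) < |2 - S α| := abs_pos.mpr (m_ne α hα0)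
  have hx : 0 ≤ r ^ (2 - S α) := Real.rpow_nonneg (by linarith) _
  have hΛ : 1 ≤ Real.log (2 + r) := one_le_log hr
  have h1 : |I₁ α B₁ B₂ 1| ≤ K α B₁ B₂ * (2 * S α + 4) := by
    have := I₁_small α B₁ B₂ hα hα0 one_pos le_rfl
    simpa [Real.sqrt_one] using this
  have h2 := int_q₁_large α B₁ B₂ hα hα0 hr
  have h2' : |∫ t in (1:ℝ)..r, q₁ α B₁ B₂ t|
      ≤ K α B₁ B₂ * ((S α + 4) / |2 - S α|) * ((1 + r ^ (2 - S α)) * Real.log (2 + r)) := by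
    apply h2.trans
    have hΛ0 : 0 ≤ Real.log (2 + r) := by linarith
    have key : K α B₁ B₂ * (S α * Real.log (2 + r) + 4) ≤
        K α B₁ B₂ * ((S α + 4) * Real.log (2 + r)) := by
      apply mul_le_mul_of_nonneg_left _ hK
      nlinarith
    calc K α B₁ B₂ * (S α * Real.log (2 + r) + 4) * ((1 + r ^ (2 - S α)) / |2 - S α|)
        ≤ K α B₁ B₂ * ((S α + 4) * Real.log (2 + r)) * ((1 + r ^ (2 - S α)) / |2 - S α|) := by
          apply mul_le_mul_of_nonneg_right key (by positivity)
      _ = K α B₁ B₂ * ((S α + 4) / |2 - S α|) * ((1 + r ^ (2 - S α)) * Real.log (2 + r)) := by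
          ring
  rw [I₁_decomp α B₁ B₂ hα hα0 hr]
  have hprod : (1:ℝ) ≤ (1 + r ^ (2 - S α)) * Real.log (2 + r) := by nlinarith
  calc |I₁ α B₁ B₂ 1 + ∫ t in (1:ℝ)..r, q₁ α B₁ B₂ t|
      ≤ |I₁ α B₁ B₂ 1| + |∫ t in (1:ℝ)..r, q₁ α B₁ B₂ t| := abs_add_le _ _
    _ ≤ K α B₁ B₂ * (2 * S α + 4)
        + K α B₁ B₂ * ((S α + 4) / |2 - S α|) * ((1 + r ^ (2 - S α)) * Real.log (2 + r)) :=
        add_le_add h1 h2'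
    _ ≤ K α B₁ B₂ * (2 * S α + 4 + (S α + 4) / |2 - S α|)
        * ((1 + r ^ (2 - S α)) * Real.log (2 + r)) := by
        have h24 : (0:ℝ) ≤ K α B₁ B₂ * (2 * S α + 4) := by positivity
        have h3 : K α B₁ B₂ * (2 * S α + 4)
            ≤ K α B₁ B₂ * (2 * S α + 4) * ((1 + r ^ (2 - S α)) * Real.log (2 + r)) := by
          nlinarith [mul_nonneg h24 (sub_nonneg.mpr hprod)]
        have e : K α B₁ B₂ * (2 * S α + 4 + (S α + 4) / |2 - S α|)
            * ((1 + r ^ (2 - S α)) * Real.log (2 + r))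
            = K α B₁ B₂ * (2 * S α + 4) * ((1 + r ^ (2 - S α)) * Real.log (2 + r))
              + K α B₁ B₂ * ((S α + 4) / |2 - S α|)
                * ((1 + r ^ (2 - S α)) * Real.log (2 + r)) := by ring
        linarith [e.le, e.ge]

lemma abs_z₁_le (hα : -1 < α) {r : ℝ} (hr : 0 < r) :
    |z₁ α r| ≤ S α * |Real.log r| + 4 := by
  have hS := S_pos α hα
  have hw1 : 1 ≤ w α r := one_le_w α hr.le
  have hz := abs_z₀_le α (r := r) hr.le
  unfold z₁
  calc |S α * z₀ α r * Real.log r + 4 / w α r|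
      ≤ |S α * z₀ α r * Real.log r| + |4 / w α r| := abs_add_le _ _
    _ ≤ S α * |Real.log r| + 4 := by
        rw [abs_mul, abs_mul, abs_of_pos hS, abs_div,
          abs_of_pos (by linarith : (0:ℝ) < w α r), show |(4:ℝ)| = 4 by norm_num]
        have h1 : S α * |z₀ α r| * |Real.log r| ≤ S α * |Real.log r| := by
          calc S α * |z₀ α r| * |Real.log r| = S α * (|z₀ α r| * |Real.log r|) := by ring
            _ ≤ S α * (1 * |Real.log r|) := by
                apply mul_le_mul_of_nonneg_left _ hS.le
                exact mul_le_mul_of_nonneg_right hz (abs_nonneg _)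
            _ = S α * |Real.log r| := by ring
        have h2 : 4 / w α r ≤ 4 := div_le_self (by norm_num) hw1
        linarith

lemma abs_c₁_le (hα : -1 < α) {r : ℝ} (hr : 0 < r) :
    |c₁ α B₁ B₂ r| ≤ (|z₁ α r| * |I₀ α B₁ B₂ r| + |I₁ α B₁ B₂ r|) / S α := by
  have hS := S_pos α hα
  have hz := abs_z₀_le α (r := r) hr.le
  unfold c₁
  rw [abs_div, abs_of_pos hS]
  gcongr
  calc |z₁ α r * I₀ α B₁ B₂ r - z₀ α r * I₁ α B₁ B₂ r|
      ≤ |z₁ α r * I₀ α B₁ B₂ r| + |z₀ α r * I₁ α B₁ B₂ r| := abs_sub _ _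
    _ ≤ |z₁ α r| * |I₀ α B₁ B₂ r| + |I₁ α B₁ B₂ r| := by
        rw [abs_mul, abs_mul]
        have := mul_le_mul_of_nonneg_right hz (abs_nonneg (I₁ α B₁ B₂ r))
        linarith


lemma rpow_cmp {r : ℝ} (hr : 1 ≤ r) :
    1 + r ^ (2 - S α) ≤ 2 * (1 + (1 + r) ^ (-(2 * α))) := by
  have hm2 : (2 - S α : ℝ) = -(2 * α) := by unfold S; ring
  rw [hm2]
  have hpos : (0:ℝ) < (1 + r) ^ (-(2 * α)) := Real.rpow_pos_of_pos (by linarith) _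
  rcases le_or_gt 0 (-(2 * α)) with hm | hm
  · have : r ^ (-(2 * α)) ≤ (1 + r) ^ (-(2 * α)) :=
      Real.rpow_le_rpow (by linarith) (by linarith) hm
    linarith
  · have : r ^ (-(2 * α)) ≤ 1 := Real.rpow_le_one_of_one_le_of_nonpos hr hm.le
    linarith

lemma c₁_bound_small (hα : -1 < α) (hα0 : α ≠ 0) {r : ℝ} (h0 : 0 < r) (h1 : r ≤ 1) :
    |c₁ α B₁ B₂ r| ≤ 2 * K α B₁ B₂ * (2 * S α + 4) / S α := by
  have hK := K_nonneg α B₁ B₂ hα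
  have hS := S_pos α hα
  have hz1 := abs_z₁_le α hα h0
  have hI0 := I₀_small α B₁ B₂ hα hα0 h0 h1
  have hI1 := I₁_small α B₁ B₂ hα hα0 h0 h1
  have hsq := sqrt_log_bound h0 h1
  have hs1 : Real.sqrt r ≤ 1 := by
    rw [show (1:ℝ) = Real.sqrt 1 by rw [Real.sqrt_one]]
    exact Real.sqrt_le_sqrt h1
  have hs0 : 0 ≤ Real.sqrt r := Real.sqrt_nonneg r
  have hla : 0 ≤ |Real.log r| := abs_nonneg _
  have h2 : r * (2 * Real.sqrt r) ≤ 2 := by nlinarith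
  have hA : |z₁ α r| * |I₀ α B₁ B₂ r| ≤ K α B₁ B₂ * (2 * S α + 4) := by
    calc |z₁ α r| * |I₀ α B₁ B₂ r| ≤ (S α * |Real.log r| + 4) * (K α B₁ B₂ * r * r) :=
          mul_le_mul hz1 hI0 (abs_nonneg _) (by positivity)
      _ ≤ K α B₁ B₂ * (2 * S α + 4) := by
          have hr2 : r * (r * |Real.log r|) ≤ 2 :=
            le_trans (mul_le_mul_of_nonneg_left hsq h0.le) h2
          have hrr : r * r ≤ 1 := by nlinarith
          nlinarith [mul_le_mul_of_nonneg_left hr2 (mul_nonneg hK hS.le),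
            mul_le_mul_of_nonneg_left hrr hK]
  have hB : |I₁ α B₁ B₂ r| ≤ K α B₁ B₂ * (2 * S α + 4) := by
    apply hI1.trans
    have : (2 * S α * Real.sqrt r + 4 * r) * r ≤ 2 * S α + 4 := by nlinarith
    nlinarith
  calc |c₁ α B₁ B₂ r| ≤ (|z₁ α r| * |I₀ α B₁ B₂ r| + |I₁ α B₁ B₂ r|) / S α :=
        abs_c₁_le α B₁ B₂ hα h0
    _ ≤ 2 * K α B₁ B₂ * (2 * S α + 4) / S α := by
        gcongr
        linarith

lemma c₁_bound_large (hα : -1 < α) (hα0 : α ≠ 0) {r : ℝ} (hr : 1 ≤ r) :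
    |c₁ α B₁ B₂ r| ≤ (2 * ((S α + 4) * (K α B₁ B₂ * (1 + 1 / |2 - S α|))
        + K α B₁ B₂ * (2 * S α + 4 + (S α + 4) / |2 - S α|)) / S α)
      * ((1 + (1 + r) ^ (-(2 * α))) * Real.log (2 + r)) := by
  have hK := K_nonneg α B₁ B₂ hα
  have hS := S_pos α hα
  have h0 : (0:ℝ) < r := by linarith
  have hA : (0:ℝ) < |2 - S α| := abs_pos.mpr (m_ne α hα0)
  have hx : 0 ≤ r ^ (2 - S α) := Real.rpow_nonneg h0.le _
  have hΛ : 1 ≤ Real.log (2 + r) := one_le_log hr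
  have hlogr : 0 ≤ Real.log r := Real.log_nonneg hr
  have hlogle : Real.log r ≤ Real.log (2 + r) := Real.log_le_log h0 (by linarith)
  have hz1 : |z₁ α r| ≤ (S α + 4) * Real.log (2 + r) := by
    apply (abs_z₁_le α hα h0).trans
    rw [abs_of_nonneg hlogr]
    nlinarith
  have hI0 := I₀_large α B₁ B₂ hα hα0 hr
  have hI1 := I₁_large α B₁ B₂ hα hα0 hr
  have key : |z₁ α r| * |I₀ α B₁ B₂ r| + |I₁ α B₁ B₂ r|
      ≤ ((S α + 4) * (K α B₁ B₂ * (1 + 1 / |2 - S α|))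
          + K α B₁ B₂ * (2 * S α + 4 + (S α + 4) / |2 - S α|))
        * ((1 + r ^ (2 - S α)) * Real.log (2 + r)) := by
    have hzI : |z₁ α r| * |I₀ α B₁ B₂ r|
        ≤ ((S α + 4) * Real.log (2 + r)) * (K α B₁ B₂ * (1 + 1 / |2 - S α|)
            * (1 + r ^ (2 - S α))) :=
      mul_le_mul hz1 hI0 (abs_nonneg _) (by positivity)
    have e : ((S α + 4) * Real.log (2 + r)) * (K α B₁ B₂ * (1 + 1 / |2 - S α|)
            * (1 + r ^ (2 - S α)))
        = ((S α + 4) * (K α B₁ B₂ * (1 + 1 / |2 - S α|)))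
          * ((1 + r ^ (2 - S α)) * Real.log (2 + r)) := by ring
    rw [e] at hzI
    have e2 : ((S α + 4) * (K α B₁ B₂ * (1 + 1 / |2 - S α|))
          + K α B₁ B₂ * (2 * S α + 4 + (S α + 4) / |2 - S α|))
        * ((1 + r ^ (2 - S α)) * Real.log (2 + r))
        = ((S α + 4) * (K α B₁ B₂ * (1 + 1 / |2 - S α|)))
            * ((1 + r ^ (2 - S α)) * Real.log (2 + r))
          + K α B₁ B₂ * (2 * S α + 4 + (S α + 4) / |2 - S α|)
            * ((1 + r ^ (2 - S α)) * Real.log (2 + r)) := by ring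
    rw [e2]
    linarith
  have hcoef : (0:ℝ) ≤ (S α + 4) * (K α B₁ B₂ * (1 + 1 / |2 - S α|))
      + K α B₁ B₂ * (2 * S α + 4 + (S α + 4) / |2 - S α|) := by positivity
  have hcmp := rpow_cmp α hr
  have hΛ0 : (0:ℝ) ≤ Real.log (2 + r) := by linarith
  calc |c₁ α B₁ B₂ r| ≤ (|z₁ α r| * |I₀ α B₁ B₂ r| + |I₁ α B₁ B₂ r|) / S α :=
        abs_c₁_le α B₁ B₂ hα h0
    _ ≤ (((S α + 4) * (K α B₁ B₂ * (1 + 1 / |2 - S α|))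
          + K α B₁ B₂ * (2 * S α + 4 + (S α + 4) / |2 - S α|))
        * ((1 + r ^ (2 - S α)) * Real.log (2 + r))) / S α := by gcongr
    _ ≤ (((S α + 4) * (K α B₁ B₂ * (1 + 1 / |2 - S α|))
          + K α B₁ B₂ * (2 * S α + 4 + (S α + 4) / |2 - S α|))
        * ((2 * (1 + (1 + r) ^ (-(2 * α)))) * Real.log (2 + r))) / S α := by
        gcongr
    _ = (2 * ((S α + 4) * (K α B₁ B₂ * (1 + 1 / |2 - S α|))
          + K α B₁ B₂ * (2 * S α + 4 + (S α + 4) / |2 - S α|)) / S α)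
        * ((1 + (1 + r) ^ (-(2 * α))) * Real.log (2 + r)) := by ring

lemma c₁_bound (hα : -1 < α) (hα0 : α ≠ 0) :
    ∃ C : ℝ, 0 < C ∧ ∀ r : ℝ, 0 < r →
      |c₁ α B₁ B₂ r| ≤ C * ((1 + (1 + r) ^ (-(2 * α))) * Real.log (2 + r)) := by
  have hK := K_nonneg α B₁ B₂ hα
  have hS := S_pos α hα
  have hA : (0:ℝ) < |2 - S α| := abs_pos.mpr (m_ne α hα0)
  set C1 : ℝ := 2 * K α B₁ B₂ * (2 * S α + 4) / S α / Real.log 2 with hC1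
  set C2 : ℝ := 2 * ((S α + 4) * (K α B₁ B₂ * (1 + 1 / |2 - S α|))
      + K α B₁ B₂ * (2 * S α + 4 + (S α + 4) / |2 - S α|)) / S α with hC2
  have hlog2 : (0:ℝ) < Real.log 2 := Real.log_pos (by norm_num)
  have hC1n : 0 ≤ C1 := by positivity
  have hC2n : 0 ≤ C2 := by positivity
  refine ⟨max C1 C2 + 1, by positivity, fun r h0 => ?_⟩
  have hy : (0:ℝ) < (1 + r) ^ (-(2 * α)) := Real.rpow_pos_of_pos (by linarith) _
  have hΛ2 : Real.log 2 ≤ Real.log (2 + r) := Real.log_le_log (by norm_num) (by linarith)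
  have hΛ0 : (0:ℝ) < Real.log (2 + r) := by linarith
  have hCle : max C1 C2 ≤ max C1 C2 + 1 := by linarith
  have hprodpos : (0:ℝ) ≤ (1 + (1 + r) ^ (-(2 * α))) * Real.log (2 + r) := by positivity
  rcases le_or_gt r 1 with h1 | h1
  · have hb := c₁_bound_small α B₁ B₂ hα hα0 h0 h1
    calc |c₁ α B₁ B₂ r| ≤ 2 * K α B₁ B₂ * (2 * S α + 4) / S α := hb
      _ = C1 * Real.log 2 := by
          rw [hC1]
          field_simp
      _ ≤ C1 * ((1 + (1 + r) ^ (-(2 * α))) * Real.log (2 + r)) := by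
          apply mul_le_mul_of_nonneg_left _ hC1n
          nlinarith
      _ ≤ (max C1 C2 + 1) * ((1 + (1 + r) ^ (-(2 * α))) * Real.log (2 + r)) := by
          apply mul_le_mul_of_nonneg_right _ hprodpos
          exact le_trans (le_max_left _ _) hCle
  · have hb := c₁_bound_large α B₁ B₂ hα hα0 h1.le
    calc |c₁ α B₁ B₂ r|
        ≤ C2 * ((1 + (1 + r) ^ (-(2 * α))) * Real.log (2 + r)) := hb
      _ ≤ (max C1 C2 + 1) * ((1 + (1 + r) ^ (-(2 * α))) * Real.log (2 + r)) := by
          apply mul_le_mul_of_nonneg_right _ hprodpos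
          exact le_trans (le_max_right _ _) hCle


lemma abs_z₀d_le (hα : -1 < α) {r : ℝ} (hr : 0 < r) :
    |z₀d α r| ≤ 2 * S α * r ^ S α / r := by
  have hS := S_pos α hα
  have hu : 0 ≤ r ^ S α := rpow_S_nonneg α hr.le
  have hw1 : 1 ≤ w α r := one_le_w α hr.le
  unfold z₀d
  have e : -2 * S α * r ^ S α = -(2 * S α * r ^ S α) := by ring
  rw [e, abs_div, abs_neg, abs_of_nonneg (by positivity),
    abs_of_pos (by positivity : (0:ℝ) < r * (w α r) ^ 2)]
  apply div_le_div_of_nonneg_left (by positivity) hr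
  have hw2 : 1 ≤ (w α r) ^ 2 := by nlinarith
  nlinarith [mul_le_mul_of_nonneg_left hw2 hr.le]

lemma abs_z₁d_le (hα : -1 < α) {r : ℝ} (hr : 0 < r) :
    |z₁d α r| ≤ 2 * S α ^ 2 * (r ^ S α / r) * |Real.log r| + S α / r
      + 4 * S α * (r ^ S α / r) := by
  have hS := S_pos α hα
  have hu : 0 ≤ r ^ S α := rpow_S_nonneg α hr.le
  have hw1 : 1 ≤ w α r := one_le_w α hr.le
  have hz := abs_z₀_le α (r := r) hr.le
  have hzd := abs_z₀d_le α hα hr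
  unfold z₁d
  have h3 : |4 * S α * r ^ S α / (r * (w α r) ^ 2)| ≤ 4 * S α * (r ^ S α / r) := by
    rw [abs_div, abs_of_nonneg (by positivity : (0:ℝ) ≤ 4 * S α * r ^ S α),
      abs_of_pos (by positivity : (0:ℝ) < r * (w α r) ^ 2)]
    rw [show 4 * S α * (r ^ S α / r) = 4 * S α * r ^ S α / r by ring]
    apply div_le_div_of_nonneg_left (by positivity) hr
    have hw2 : 1 ≤ (w α r) ^ 2 := by nlinarith
    nlinarith [mul_le_mul_of_nonneg_left hw2 hr.le]
  have hla := abs_nonneg (Real.log r)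
  have h1 : |S α * z₀d α r * Real.log r| ≤ 2 * S α ^ 2 * (r ^ S α / r) * |Real.log r| := by
    rw [abs_mul, abs_mul, abs_of_pos hS]
    calc S α * |z₀d α r| * |Real.log r|
        ≤ S α * (2 * S α * r ^ S α / r) * |Real.log r| := by
          apply mul_le_mul_of_nonneg_right _ hla
          exact mul_le_mul_of_nonneg_left hzd hS.le
      _ = 2 * S α ^ 2 * (r ^ S α / r) * |Real.log r| := by ring
  have h2 : |S α * z₀ α r / r| ≤ S α / r := by
    rw [abs_div, abs_mul, abs_of_pos hS, abs_of_pos hr]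
    gcongr
    nlinarith
  calc |S α * z₀d α r * Real.log r + S α * z₀ α r / r - 4 * S α * r ^ S α / (r * (w α r) ^ 2)|
      ≤ |S α * z₀d α r * Real.log r + S α * z₀ α r / r|
        + |4 * S α * r ^ S α / (r * (w α r) ^ 2)| := abs_sub _ _
    _ ≤ |S α * z₀d α r * Real.log r| + |S α * z₀ α r / r|
        + |4 * S α * r ^ S α / (r * (w α r) ^ 2)| := by
        have := abs_add_le (S α * z₀d α r * Real.log r) (S α * z₀ α r / r)
        linarith
    _ ≤ 2 * S α ^ 2 * (r ^ S α / r) * |Real.log r| + S α / r + 4 * S α * (r ^ S α / r) := by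
        linarith

lemma abs_c₁d_le (hα : -1 < α) {r : ℝ} (hr : 0 < r) :
    |c₁d α B₁ B₂ r| ≤ (|z₁d α r| * |I₀ α B₁ B₂ r| + |z₀d α r| * |I₁ α B₁ B₂ r|) / S α := by
  have hS := S_pos α hα
  unfold c₁d
  rw [abs_div, abs_of_pos hS]
  gcongr
  calc |z₁d α r * I₀ α B₁ B₂ r - z₀d α r * I₁ α B₁ B₂ r|
      ≤ |z₁d α r * I₀ α B₁ B₂ r| + |z₀d α r * I₁ α B₁ B₂ r| := abs_sub _ _
    _ = |z₁d α r| * |I₀ α B₁ B₂ r| + |z₀d α r| * |I₁ α B₁ B₂ r| := by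
        rw [abs_mul, abs_mul]

lemma tendsto_c₁_zero (hα : -1 < α) (hα0 : α ≠ 0) :
    Filter.Tendsto (c₁ α B₁ B₂) (nhdsWithin 0 (Set.Ioi 0)) (nhds 0) := by
  have hK := K_nonneg α B₁ B₂ hα
  have hS := S_pos α hα
  set b : ℝ → ℝ := fun r => (K α B₁ B₂ * S α * (r * |r * Real.log r|)
      + 4 * K α B₁ B₂ * (r * r)
      + K α B₁ B₂ * (2 * S α * Real.sqrt r + 4 * r) * r) / S α with hbdef
  have hbc : Continuous b := by
    apply Continuous.div_const
    apply Continuous.add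
    · apply Continuous.add
      · exact continuous_const.mul (continuous_id.mul Real.continuous_mul_log.abs)
      · exact continuous_const.mul (continuous_id.mul continuous_id)
    · exact (continuous_const.mul
        ((continuous_const.mul Real.continuous_sqrt).add
          (continuous_const.mul continuous_id))).mul continuous_id
  have hb0 : b 0 = 0 := by
    simp [hbdef, Real.sqrt_zero]
  apply squeeze_zero_norm' ?_ (tendsto_nhdsWithin_of_tendsto_nhds (hb0 ▸ hbc.tendsto 0))
  filter_upwards [Ioc_mem_nhdsGT_of_mem (Set.mem_Ico.mpr ⟨le_rfl, one_pos⟩)] with r hr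
  obtain ⟨h0, h1⟩ := hr
  have hz1 := abs_z₁_le α hα h0
  have hI0 := I₀_small α B₁ B₂ hα hα0 h0 h1
  have hI1 := I₁_small α B₁ B₂ hα hα0 h0 h1
  have hrabs : r * |Real.log r| = |r * Real.log r| := by
    rw [abs_mul, abs_of_pos h0]
  calc ‖c₁ α B₁ B₂ r‖ ≤ (|z₁ α r| * |I₀ α B₁ B₂ r| + |I₁ α B₁ B₂ r|) / S α :=
        abs_c₁_le α B₁ B₂ hα h0
    _ ≤ ((S α * |Real.log r| + 4) * (K α B₁ B₂ * r * r)
          + K α B₁ B₂ * (2 * S α * Real.sqrt r + 4 * r) * r) / S α := by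
        gcongr
    _ = b r := by
        simp only [hbdef, ← hrabs]
        ring

lemma tendsto_c₁d_zero (hα : -1 < α) (hα0 : α ≠ 0) :
    Filter.Tendsto (c₁d α B₁ B₂) (nhdsWithin 0 (Set.Ioi 0)) (nhds 0) := by
  have hK := K_nonneg α B₁ B₂ hα
  have hS := S_pos α hα
  set b : ℝ → ℝ := fun r => (2 * K α B₁ B₂ * S α ^ 2 * |r * Real.log r|
      + 5 * K α B₁ B₂ * S α * r
      + 2 * S α * K α B₁ B₂ * (2 * S α * Real.sqrt r + 4 * r)) / S α with hbdef
  have hbc : Continuous b := by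
    apply Continuous.div_const
    apply Continuous.add
    · apply Continuous.add
      · exact continuous_const.mul Real.continuous_mul_log.abs
      · exact continuous_const.mul continuous_id
    · exact continuous_const.mul
        ((continuous_const.mul Real.continuous_sqrt).add (continuous_const.mul continuous_id))
  have hb0 : b 0 = 0 := by
    simp [hbdef, Real.sqrt_zero]
  apply squeeze_zero_norm' ?_ (tendsto_nhdsWithin_of_tendsto_nhds (hb0 ▸ hbc.tendsto 0))
  filter_upwards [Ioc_mem_nhdsGT_of_mem (Set.mem_Ico.mpr ⟨le_rfl, one_pos⟩)] with r hr
  obtain ⟨h0, h1⟩ := hr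
  have hu : 0 ≤ r ^ S α := rpow_S_nonneg α h0.le
  have hu1 : r ^ S α ≤ 1 := Real.rpow_le_one h0.le h1 hS.le
  have hz1d := abs_z₁d_le α hα h0
  have hz0d := abs_z₀d_le α hα h0
  have hI0 := I₀_small α B₁ B₂ hα hα0 h0 h1
  have hI1 := I₁_small α B₁ B₂ hα hα0 h0 h1
  have hla : 0 ≤ |Real.log r| := abs_nonneg _
  have hs0 : 0 ≤ Real.sqrt r := Real.sqrt_nonneg r
  have hrabs : r * |Real.log r| = |r * Real.log r| := by
    rw [abs_mul, abs_of_pos h0]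
  have T1 : |z₁d α r| * |I₀ α B₁ B₂ r|
      ≤ 2 * K α B₁ B₂ * S α ^ 2 * |r * Real.log r| + 5 * K α B₁ B₂ * S α * r := by
    calc |z₁d α r| * |I₀ α B₁ B₂ r|
        ≤ (2 * S α ^ 2 * (r ^ S α / r) * |Real.log r| + S α / r + 4 * S α * (r ^ S α / r))
            * (K α B₁ B₂ * r * r) :=
          mul_le_mul hz1d hI0 (abs_nonneg _) (by positivity)
      _ = K α B₁ B₂ * (2 * S α ^ 2 * (r ^ S α * (r * |Real.log r|))
            + S α * r + 4 * S α * (r ^ S α * r)) := by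
          field_simp
      _ ≤ 2 * K α B₁ B₂ * S α ^ 2 * (r * |Real.log r|) + 5 * K α B₁ B₂ * S α * r := by
          have hx : 0 ≤ r * |Real.log r| := by positivity
          have h5 : 2 * K α B₁ B₂ * S α ^ 2 * (r ^ S α * (r * |Real.log r|))
              ≤ 2 * K α B₁ B₂ * S α ^ 2 * (r * |Real.log r|) := by
            apply mul_le_mul_of_nonneg_left _ (by positivity)
            nlinarith [mul_le_mul_of_nonneg_right hu1 hx]
          have h6 : 4 * K α B₁ B₂ * S α * (r ^ S α * r) ≤ 4 * K α B₁ B₂ * S α * r := by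
            apply mul_le_mul_of_nonneg_left _ (by positivity)
            nlinarith [mul_le_mul_of_nonneg_right hu1 h0.le]
          linarith [h5, h6]
      _ = 2 * K α B₁ B₂ * S α ^ 2 * |r * Real.log r| + 5 * K α B₁ B₂ * S α * r := by
          rw [hrabs]
  have T2 : |z₀d α r| * |I₁ α B₁ B₂ r|
      ≤ 2 * S α * K α B₁ B₂ * (2 * S α * Real.sqrt r + 4 * r) := by
    calc |z₀d α r| * |I₁ α B₁ B₂ r|
        ≤ (2 * S α * r ^ S α / r) * (K α B₁ B₂ * (2 * S α * Real.sqrt r + 4 * r) * r) :=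
          mul_le_mul hz0d hI1 (abs_nonneg _) (by positivity)
      _ = 2 * S α * K α B₁ B₂ * (2 * S α * Real.sqrt r + 4 * r) * r ^ S α := by
          field_simp
      _ ≤ 2 * S α * K α B₁ B₂ * (2 * S α * Real.sqrt r + 4 * r) := by
          nlinarith [mul_nonneg (mul_nonneg (by positivity : (0:ℝ) ≤ 2 * S α * K α B₁ B₂)
            (by positivity : (0:ℝ) ≤ 2 * S α * Real.sqrt r + 4 * r)) (sub_nonneg.mpr hu1)]
  calc ‖c₁d α B₁ B₂ r‖
      ≤ (|z₁d α r| * |I₀ α B₁ B₂ r| + |z₀d α r| * |I₁ α B₁ B₂ r|) / S α :=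
        abs_c₁d_le α B₁ B₂ hα h0
    _ ≤ b r := by
        simp only [hbdef]
        gcongr

end assemble

section finalcont

lemma continuousOn_log' : ContinuousOn Real.log (Set.Ioi 0) :=
  Real.continuousOn_log.mono (fun x hx => Set.mem_compl_singleton_iff.mpr (ne_of_gt hx))

lemma contOn_pow (hα : -1 < α) : ContinuousOn (fun t : ℝ => t ^ S α) (Set.Ioi 0) :=
  (continuous_rpowS α hα).continuousOn

lemma Ioi_subset_Ici : Set.Ioi (0:ℝ) ⊆ Set.Ici 0 := Set.Ioi_subset_Ici_self

lemma contOn_w (hα : -1 < α) : ContinuousOn (w α) (Set.Ioi 0) :=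
  (continuousOn_w α hα).mono Ioi_subset_Ici

lemma rw2_ne {r : ℝ} (hr : r ∈ Set.Ioi (0:ℝ)) : r ^ 2 * (w α r) ^ 2 ≠ 0 := by
  have := w_ne α (le_of_lt hr)
  have : (0:ℝ) < r := hr
  positivity

lemma rw3_ne {r : ℝ} (hr : r ∈ Set.Ioi (0:ℝ)) : r ^ 2 * (w α r) ^ 3 ≠ 0 := by
  have := w_ne α (le_of_lt hr)
  have : (0:ℝ) < r := hr
  positivity

lemma contOn_z₀dd (hα : -1 < α) : ContinuousOn (z₀dd α) (Set.Ioi 0) := by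
  apply ContinuousOn.add
  · exact (continuousOn_const.mul (contOn_pow α hα)).div
      (((continuous_pow 2).continuousOn).mul ((contOn_w α hα).pow 2)) (fun r hr => rw2_ne α hr)
  · exact (continuousOn_const.mul ((contOn_pow α hα).pow 2)).div
      (((continuous_pow 2).continuousOn).mul ((contOn_w α hα).pow 3)) (fun r hr => rw3_ne α hr)

lemma contOn_z₀ (hα : -1 < α) : ContinuousOn (z₀ α) (Set.Ioi 0) :=
  (continuousOn_z₀ α hα).mono Ioi_subset_Ici

lemma contOn_z₀d (hα : -1 < α) : ContinuousOn (z₀d α) (Set.Ioi 0) := by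
  apply (continuousOn_const.mul (contOn_pow α hα)).div
    ((continuous_id.continuousOn).mul ((contOn_w α hα).pow 2))
  intro r hr
  have := w_ne α (le_of_lt hr)
  have h0 : (0:ℝ) < r := hr
  simp only [Pi.mul_apply, Pi.pow_apply, id_eq]
  positivity

lemma contOn_z₁dd (hα : -1 < α) : ContinuousOn (z₁dd α) (Set.Ioi 0) := by
  unfold z₁dd
  apply ContinuousOn.add
  apply ContinuousOn.sub
  apply ContinuousOn.sub
  apply ContinuousOn.add
  · exact (continuousOn_const.mul (contOn_z₀dd α hα)).mul (continuousOn_log' )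
  · exact (continuousOn_const.mul (contOn_z₀d α hα)).div (continuous_id.continuousOn)
      (fun r hr => ne_of_gt hr)
  · exact (continuousOn_const.mul (contOn_z₀ α hα)).div ((continuous_pow 2).continuousOn)
      (fun r hr => by have h0 : (0:ℝ) < r := hr; positivity)
  · exact (continuousOn_const.mul (contOn_pow α hα)).div
      (((continuous_pow 2).continuousOn).mul ((contOn_w α hα).pow 2)) (fun r hr => rw2_ne α hr)
  · exact (continuousOn_const.mul ((contOn_pow α hα).pow 2)).div
      (((continuous_pow 2).continuousOn).mul ((contOn_w α hα).pow 3)) (fun r hr => rw3_ne α hr)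

lemma contOn_I₀ (hα : -1 < α) (hα0 : α ≠ 0) : ContinuousOn (I₀ α B₁ B₂) (Set.Ioi 0) :=
  fun r hr => ((hasDerivAt_I₀ α B₁ B₂ hα hα0 hr).continuousAt).continuousWithinAt

lemma contOn_I₁ (hα : -1 < α) (hα0 : α ≠ 0) : ContinuousOn (I₁ α B₁ B₂) (Set.Ioi 0) :=
  fun r hr => ((hasDerivAt_I₁ α B₁ B₂ hα hα0 hr).continuousAt).continuousWithinAt

lemma continuousOn_c₁dd (hα : -1 < α) (hα0 : α ≠ 0) :
    ContinuousOn (c₁dd α B₁ B₂) (Set.Ioi 0) := by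
  unfold c₁dd
  apply ContinuousOn.add
  · exact (((contOn_z₁dd α hα).mul (contOn_I₀ α B₁ B₂ hα hα0)).sub
      ((contOn_z₀dd α hα).mul (contOn_I₁ α B₁ B₂ hα hα0))).div_const (S α)
  · exact (continuousOn_Hn α B₁ B₂ hα hα0).mono Ioi_subset_Ici

end finalcont
end Stmt10
end

open Stmt10 in
/-- solvability of the radial (frequency-0) forced linearized
equation on `(0, ε⁻¹)` with the radial second-order forcing
`-ε² r^{2α}(1+r^{2+2α})^{-2}(B₁r² + B₂(4(1+α)²g_α² + g_α r))`, with vanishing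
value and derivative at the origin and a uniform bound. -/
theorem stmt10 (α : ℝ) (hα : α > -1) (hα0 : α ≠ 0) (B₁ B₂ : ℝ) :
    ∃ C : ℝ, 0 < C ∧
      ∀ ε : ℝ, 0 < ε → ε < 1 →
        ∃ c : ℝ → ℝ, ContDiffOn ℝ 2 c (Set.Ioo 0 ε⁻¹) ∧
          (∀ r : ℝ, 0 < r → r < ε⁻¹ →
            deriv (deriv c) r + deriv c r / r
              + 8 * (1 + α) ^ 2 * r ^ (2 * α) / (1 + r ^ (2 + 2 * α)) ^ 2 * c r
            = -(ε ^ 2) * r ^ (2 * α) / (1 + r ^ (2 + 2 * α)) ^ 2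
                * (B₁ * r ^ 2
                    + B₂ * (4 * (1 + α) ^ 2 * gfun α r ^ 2 + gfun α r * r))) ∧
          Tendsto c (nhdsWithin 0 (Set.Ioi 0)) (nhds 0) ∧
          Tendsto (deriv c) (nhdsWithin 0 (Set.Ioi 0)) (nhds 0) ∧
          (∀ r : ℝ, 0 < r → r < ε⁻¹ →
            |c r| ≤ C * ε ^ 2 * (1 + (1 + r) ^ (-(2 * α))) * Real.log (2 + r)) := by
  obtain ⟨C, hC, hCb⟩ := c₁_bound α B₁ B₂ hα hα0
  refine ⟨C, hC, fun ε hε hε1 => ?_⟩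
  refine ⟨fun r => ε ^ 2 * c₁ α B₁ B₂ r, ?_, ?_, ?_, ?_, ?_⟩
  case _ =>
    -- ContDiffOn
    have hsub : Set.Ioo (0:ℝ) ε⁻¹ ⊆ Set.Ioi 0 := fun x hx => hx.1
    have hco : ContinuousOn (fun x => ε ^ 2 * c₁dd α B₁ B₂ x) (Set.Ioo (0:ℝ) ε⁻¹) :=
      continuousOn_const.mul ((continuousOn_c₁dd α B₁ B₂ hα hα0).mono hsub)
    rw [show (2 : WithTop ℕ∞) = 1 + 1 by norm_num]
    apply (contDiffOn_succ_iff_deriv_of_isOpen isOpen_Ioo).mpr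
    refine ⟨fun x hx => ((hasDerivAt_c₁ α B₁ B₂ hα hα0 (hsub hx)).const_mul
        (ε ^ 2)).differentiableAt.differentiableWithinAt, by simp, ?_⟩
    apply ContDiffOn.congr (f := fun x => ε ^ 2 * c₁d α B₁ B₂ x)
      ?_ (fun x hx => ((hasDerivAt_c₁ α B₁ B₂ hα hα0 (hsub hx)).const_mul (ε ^ 2)).deriv)
    rw [show (1 : WithTop ℕ∞) = 0 + 1 by norm_num]
    apply (contDiffOn_succ_iff_deriv_of_isOpen isOpen_Ioo).mpr
    refine ⟨fun x hx => ((hasDerivAt_c₁d α B₁ B₂ hα hα0 (hsub hx)).const_mul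
        (ε ^ 2)).differentiableAt.differentiableWithinAt, by simp, ?_⟩
    rw [contDiffOn_zero]
    exact ContinuousOn.congr hco
      (fun x hx => ((hasDerivAt_c₁d α B₁ B₂ hα hα0 (hsub hx)).const_mul (ε ^ 2)).deriv)
  case _ =>
    -- ODE
    intro r hr hrε
    have hd1 : deriv (fun r => ε ^ 2 * c₁ α B₁ B₂ r) r = ε ^ 2 * c₁d α B₁ B₂ r :=
      ((hasDerivAt_c₁ α B₁ B₂ hα hα0 hr).const_mul (ε ^ 2)).deriv
    have hev : deriv (fun r => ε ^ 2 * c₁ α B₁ B₂ r)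
        =ᶠ[nhds r] (fun y => ε ^ 2 * c₁d α B₁ B₂ y) := by
      filter_upwards [isOpen_Ioi.mem_nhds (show r ∈ Set.Ioi (0:ℝ) from hr)] with y hy
      exact ((hasDerivAt_c₁ α B₁ B₂ hα hα0 hy).const_mul (ε ^ 2)).deriv
    have hd2 : deriv (deriv (fun r => ε ^ 2 * c₁ α B₁ B₂ r)) r
        = ε ^ 2 * c₁dd α B₁ B₂ r := by
      rw [Filter.EventuallyEq.deriv_eq hev]
      exact ((hasDerivAt_c₁d α B₁ B₂ hα hα0 hr).const_mul (ε ^ 2)).deriv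
    rw [hd1, hd2, forcing_eq α B₁ B₂ hα hα0 hr ε]
    have hode := ode_c₁ α B₁ B₂ hα hα0 hr
    have hVeq : 8 * (1 + α) ^ 2 * r ^ (2 * α) / (1 + r ^ (2 + 2 * α)) ^ 2 = V α r := rfl
    rw [hVeq]
    linear_combination (ε ^ 2) * hode
  case _ =>
    have h := (tendsto_c₁_zero α B₁ B₂ hα hα0).const_mul (ε ^ 2)
    simpa using h
  case _ =>
    have h := (tendsto_c₁d_zero α B₁ B₂ hα hα0).const_mul (ε ^ 2)
    rw [mul_zero] at h
    apply h.congr'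
    filter_upwards [self_mem_nhdsWithin] with y hy
    exact (((hasDerivAt_c₁ α B₁ B₂ hα hα0 hy).const_mul (ε ^ 2)).deriv).symm
  case _ =>
    intro r hr hrε
    have hb := hCb r hr
    have hε2 : (0:ℝ) ≤ ε ^ 2 := sq_nonneg ε
    calc |ε ^ 2 * c₁ α B₁ B₂ r| = ε ^ 2 * |c₁ α B₁ B₂ r| := by
          rw [abs_mul, abs_of_nonneg hε2]
      _ ≤ ε ^ 2 * (C * ((1 + (1 + r) ^ (-(2 * α))) * Real.log (2 + r))) :=
          mul_le_mul_of_nonneg_left hb hε2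
      _ = C * ε ^ 2 * (1 + (1 + r) ^ (-(2 * α))) * Real.log (2 + r) := by ring
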